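/- For every integer n ≥ 2 and every integer k ≥ 1, the number of non-equivalent distinguishing colorings of the complete bipartite graph K_{n,n} with colors from {1,…,k} equals C(k,n)·(C(k,n) − 1)/2, i.e., Φ_k(K_{n,n}) = C(k,n)(C(k,n)−1)/2. -/

import Mathlib

open SimpleGraph

def IsDistinguishing {V : Type*} {k : ℕ} (G : SimpleGraph V) (c : V → Fin k) : Prop :=
  ∀ α : G ≃g G, (∀ v, c (α v) = c v) → ∀ v, α v = v

noncomputable def Phi {V : Type*} (G : SimpleGraph V) (k : ℕ) : ℕ :=
  Nat.card (Quot (fun c₁ c₂ : {c : V → Fin k // IsDistinguishing G c} =>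
    ∃ α : G ≃g G, ∀ v, c₁.1 v = c₂.1 (α v)))

noncomputable def phi {V : Type*} (G : SimpleGraph V) (k : ℕ) : ℕ :=
  Nat.card (Quot (fun c₁ c₂ : {c : V → Fin k // IsDistinguishing G c ∧ Function.Surjective c} =>
    ∃ α : G ≃g G, ∀ v, c₁.1 v = c₂.1 (α v)))

noncomputable def theta {V : Type*} (G : SimpleGraph V) : ℕ :=
  sInf {t | ∀ k, t ≤ k → ∀ c : V → Fin k, Function.Surjective c → IsDistinguishing G c}

def stirling2 : ℕ → ℕ → ℕ
  | 0, 0 => 1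
  | 0, _ + 1 => 0
  | _ + 1, 0 => 0
  | n + 1, k + 1 => (k + 1) * stirling2 n (k + 1) + stirling2 n k

def IsDCPartition {V : Type*} [DecidableEq V] [Fintype V] (G : SimpleGraph V)
    (P : Finpartition (Finset.univ : Finset V)) : Prop :=
  ∀ α : G ≃g G, (∀ p ∈ P.parts, p.image ⇑α = p) → ∀ v, α v = v

def IsDPartition {V : Type*} [DecidableEq V] [Fintype V] (G : SimpleGraph V)
    (P : Finpartition (Finset.univ : Finset V)) : Prop :=
  ∀ α : G ≃g G, P.parts.image (fun p => p.image ⇑α) = P.parts → ∀ v, α v = v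

def PartEquiv {V : Type*} [DecidableEq V] [Fintype V] (G : SimpleGraph V)
    (P₁ P₂ : Finpartition (Finset.univ : Finset V)) : Prop :=
  ∃ α : G ≃g G, P₁.parts.image (fun p => p.image ⇑α) = P₂.parts

noncomputable def psi {V : Type*} [DecidableEq V] [Fintype V] (G : SimpleGraph V) (k : ℕ) : ℕ :=
  Nat.card (Quot (fun P₁ P₂ : {P : Finpartition (Finset.univ : Finset V) //
      IsDCPartition G P ∧ P.parts.card = k} => PartEquiv G P₁.1 P₂.1))

noncomputable def PsiAtMost {V : Type*} [DecidableEq V] [Fintype V] (G : SimpleGraph V) (k : ℕ) : ℕ :=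
  Nat.card (Quot (fun P₁ P₂ : {P : Finpartition (Finset.univ : Finset V) //
      IsDCPartition G P ∧ P.parts.card ≤ k} => PartEquiv G P₁.1 P₂.1))

noncomputable def PiAtMost {V : Type*} [DecidableEq V] [Fintype V] (G : SimpleGraph V) (k : ℕ) : ℕ :=
  Nat.card (Quot (fun P₁ P₂ : {P : Finpartition (Finset.univ : Finset V) //
      P.parts.card ≤ k} => PartEquiv G P₁.1 P₂.1))

noncomputable def XiAtMost {V : Type*} [DecidableEq V] [Fintype V] (G : SimpleGraph V) (k : ℕ) : ℕ :=
  Nat.card (Quot (fun P₁ P₂ : {P : Finpartition (Finset.univ : Finset V) //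
      IsDPartition G P ∧ P.parts.card ≤ k} => PartEquiv G P₁.1 P₂.1))

def kneserGraph2 (n : ℕ) : SimpleGraph {s : Finset (Fin n) // s.card = 2} where
  Adj a b := Disjoint a.1 b.1
  symm := ⟨fun a b h => h.symm⟩
  loopless := by
    constructor
    rintro ⟨s, hs⟩ h
    simp only [disjoint_self, Finset.bot_eq_empty] at h
    simp [h] at hs

def lexProd {V W : Type*} (X : SimpleGraph V) (Y : SimpleGraph W) : SimpleGraph (V × W) where
  Adj a b := X.Adj a.1 b.1 ∨ (a.1 = b.1 ∧ Y.Adj a.2 b.2)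
  symm := by
    constructor
    rintro ⟨x, y⟩ ⟨x', y'⟩ (h | ⟨h, h'⟩)
    · exact Or.inl h.symm
    · exact Or.inr ⟨h.symm, h'.symm⟩
  loopless := by
    constructor
    rintro ⟨x, y⟩ (h | ⟨-, h⟩)
    · exact X.irrefl h
    · exact Y.irrefl h

def IsNaturalAut {V W : Type*} (X : SimpleGraph V) (Y : SimpleGraph W)
    (μ : lexProd X Y ≃g lexProd X Y) : Prop :=
  ∀ x : V, ∃ x' : V, (fun p => μ p) '' ({x} ×ˢ (Set.univ : Set W)) = {x'} ×ˢ (Set.univ : Set W)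

noncomputable def distNumber {V : Type*} (G : SimpleGraph V) : ℕ :=
  sInf {k | ∃ c : V → Fin k, IsDistinguishing G c}

namespace PhiCBAux

variable {n k : ℕ}

/-- A same-sides automorphism of the complete bipartite graph. -/
def sumIso (σ τ : Fin n ≃ Fin n) :
    completeBipartiteGraph (Fin n) (Fin n) ≃g completeBipartiteGraph (Fin n) (Fin n) where
  toEquiv := Equiv.sumCongr σ τ
  map_rel_iff' := by rintro (a | a) (b | b) <;> simp

/-- A side-swapping automorphism of the complete bipartite graph. -/
def swapIso (σ τ : Fin n ≃ Fin n) :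
    completeBipartiteGraph (Fin n) (Fin n) ≃g completeBipartiteGraph (Fin n) (Fin n) where
  toEquiv := (Equiv.sumCongr σ τ).trans (Equiv.sumComm _ _)
  map_rel_iff' := by rintro (a | a) (b | b) <;> simp

@[simp] lemma sumIso_inl (σ τ : Fin n ≃ Fin n) (i : Fin n) :
    sumIso σ τ (Sum.inl i) = Sum.inl (σ i) := rfl

@[simp] lemma sumIso_inr (σ τ : Fin n ≃ Fin n) (i : Fin n) :
    sumIso σ τ (Sum.inr i) = Sum.inr (τ i) := rfl

@[simp] lemma swapIso_inl (σ τ : Fin n ≃ Fin n) (i : Fin n) :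
    swapIso σ τ (Sum.inl i) = Sum.inr (σ i) := rfl

@[simp] lemma swapIso_inr (σ τ : Fin n ≃ Fin n) (i : Fin n) :
    swapIso σ τ (Sum.inr i) = Sum.inl (τ i) := rfl

lemma adj_iff (a b : Fin n ⊕ Fin n) :
    (completeBipartiteGraph (Fin n) (Fin n)).Adj a b ↔ a.isLeft ≠ b.isLeft := by
  rcases a with a | a <;> rcases b with b | b <;> simp

/-- Every automorphism either preserves the two sides or swaps them. -/
lemma sides (hn : 0 < n)
    (α : completeBipartiteGraph (Fin n) (Fin n) ≃g completeBipartiteGraph (Fin n) (Fin n)) :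
    (∀ v, (α v).isLeft = v.isLeft) ∨ (∀ v, (α v).isLeft = !v.isLeft) := by
  have key : ∀ a b, ((α a).isLeft = (α b).isLeft) ↔ (a.isLeft = b.isLeft) := by
    intro a b
    have h := α.map_rel_iff (a := a) (b := b)
    rw [adj_iff, adj_iff] at h
    constructor
    · intro h'
      by_contra hc
      exact (h.mpr hc) h'
    · intro h'
      by_contra hc
      exact (h.mp hc) h'
  set v₀ : Fin n ⊕ Fin n := Sum.inl ⟨0, hn⟩ with hv₀
  by_cases h0 : (α v₀).isLeft = true
  · left
    intro v
    rcases hv : v.isLeft with _ | _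
    · have : ¬ ((α v).isLeft = (α v₀).isLeft) := by
        rw [key]
        simp [hv, hv₀]
      rw [h0] at this
      simpa using this
    · have : (α v).isLeft = (α v₀).isLeft := by
        rw [key]
        simp [hv, hv₀]
      rw [h0] at this
      simp [this, hv]
  · right
    intro v
    rcases hv : v.isLeft with _ | _
    · have : ¬ ((α v).isLeft = (α v₀).isLeft) := by
        rw [key]
        simp [hv, hv₀]
      rcases h1 : (α v₀).isLeft with _ | _
      · rw [h1] at this
        simp at this
        simp [this]
      · exact absurd h1 h0
    · have : (α v).isLeft = (α v₀).isLeft := by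
        rw [key]
        simp [hv, hv₀]
      rcases h1 : (α v₀).isLeft with _ | _
      · rw [h1] at this
        simp [this]
      · exact absurd h1 h0

/-- Two injections with the same range differ by a permutation. -/
lemma exists_comp {f g : Fin n → Fin k} (hf : Function.Injective f)
    (hg : Function.Injective g) (h : Set.range f = Set.range g) :
    ∃ σ : Fin n ≃ Fin n, ∀ i, g (σ i) = f i := by
  refine ⟨(Equiv.ofInjective f hf).trans ((Equiv.setCongr h).trans
    (Equiv.ofInjective g hg).symm), fun i => ?_⟩
  simpa using Equiv.apply_ofInjective_symm hg ((Equiv.setCongr h) (Equiv.ofInjective f hf i))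

/-- The set of colors on the left side. -/
def Lset (c : Fin n ⊕ Fin n → Fin k) : Finset (Fin k) :=
  Finset.image (fun i => c (Sum.inl i)) Finset.univ

/-- The set of colors on the right side. -/
def Rset (c : Fin n ⊕ Fin n → Fin k) : Finset (Fin k) :=
  Finset.image (fun i => c (Sum.inr i)) Finset.univ

lemma mem_Lset {c : Fin n ⊕ Fin n → Fin k} {a : Fin k} :
    a ∈ Lset c ↔ ∃ i, c (Sum.inl i) = a := by simp [Lset]

lemma mem_Rset {c : Fin n ⊕ Fin n → Fin k} {a : Fin k} :
    a ∈ Rset c ↔ ∃ i, c (Sum.inr i) = a := by simp [Rset]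

lemma coe_Lset (c : Fin n ⊕ Fin n → Fin k) :
    (Lset c : Set (Fin k)) = Set.range (fun i => c (Sum.inl i)) := by
  rw [Lset, Finset.coe_image, Finset.coe_univ, Set.image_univ]

lemma coe_Rset (c : Fin n ⊕ Fin n → Fin k) :
    (Rset c : Set (Fin k)) = Set.range (fun i => c (Sum.inr i)) := by
  rw [Rset, Finset.coe_image, Finset.coe_univ, Set.image_univ]

/-- Characterization of distinguishing colorings of `K_{n,n}`. -/
lemma dist_iff (hn : 0 < n) (c : Fin n ⊕ Fin n → Fin k) :
    IsDistinguishing (completeBipartiteGraph (Fin n) (Fin n)) c ↔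
      Function.Injective (fun i => c (Sum.inl i)) ∧
      Function.Injective (fun i => c (Sum.inr i)) ∧ Lset c ≠ Rset c := by
  constructor
  · intro hd
    have hL : Function.Injective (fun i => c (Sum.inl i)) := by
      intro i j hij
      have pres : ∀ v, c (sumIso (Equiv.swap i j) (Equiv.refl _) v) = c v := by
        rintro (x | x)
        · simp only [sumIso_inl]
          rcases eq_or_ne x i with rfl | hxi
          · rw [Equiv.swap_apply_left]; exact hij.symm
          rcases eq_or_ne x j with rfl | hxj
          · rw [Equiv.swap_apply_right]; exact hij
          · rw [Equiv.swap_apply_of_ne_of_ne hxi hxj]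
        · simp
      have := hd _ pres (Sum.inl i)
      simp only [sumIso_inl, Sum.inl.injEq] at this
      rw [Equiv.swap_apply_left] at this
      exact this.symm
    have hR : Function.Injective (fun i => c (Sum.inr i)) := by
      intro i j hij
      have pres : ∀ v, c (sumIso (Equiv.refl _) (Equiv.swap i j) v) = c v := by
        rintro (x | x)
        · simp
        · simp only [sumIso_inr]
          rcases eq_or_ne x i with rfl | hxi
          · rw [Equiv.swap_apply_left]; exact hij.symm
          rcases eq_or_ne x j with rfl | hxj
          · rw [Equiv.swap_apply_right]; exact hij
          · rw [Equiv.swap_apply_of_ne_of_ne hxi hxj]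
      have := hd _ pres (Sum.inr i)
      simp only [sumIso_inr, Sum.inr.injEq] at this
      rw [Equiv.swap_apply_left] at this
      exact this.symm
    refine ⟨hL, hR, ?_⟩
    intro heq
    have hrange : Set.range (fun i => c (Sum.inl i)) = Set.range (fun i => c (Sum.inr i)) := by
      rw [← coe_Lset, ← coe_Rset, heq]
    obtain ⟨σ, hσ⟩ := exists_comp hL hR hrange
    have pres : ∀ v, c (swapIso σ σ.symm v) = c v := by
      rintro (x | x)
      · simpa using hσ x
      · simp only [swapIso_inr]
        have := hσ (σ.symm x)
        rw [Equiv.apply_symm_apply] at this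
        exact this.symm
    have := hd _ pres (Sum.inl ⟨0, hn⟩)
    simp at this
  · rintro ⟨hL, hR, hne⟩ α pres v
    rcases sides hn α with hs | hs
    · rcases v with i | i
      · rcases hq : α (Sum.inl i) with y | y
        · have hcx : c (Sum.inl y) = c (Sum.inl i) := by rw [← hq]; exact pres _
          exact congrArg Sum.inl (hL hcx)
        · exfalso; have := hs (Sum.inl i); rw [hq] at this; simp at this
      · rcases hq : α (Sum.inr i) with y | y
        · exfalso; have := hs (Sum.inr i); rw [hq] at this; simp at this
        · have hcx : c (Sum.inr y) = c (Sum.inr i) := by rw [← hq]; exact pres _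
          exact congrArg Sum.inr (hR hcx)
    · exfalso
      apply hne
      apply Finset.Subset.antisymm
      · intro a ha
        obtain ⟨i, hi⟩ := mem_Lset.mp ha
        rcases hq : α (Sum.inl i) with y | y
        · exfalso; have := hs (Sum.inl i); rw [hq] at this; simp at this
        · exact mem_Rset.mpr ⟨y, by rw [← hi, ← pres (Sum.inl i), hq]⟩
      · intro a ha
        obtain ⟨i, hi⟩ := mem_Rset.mp ha
        rcases hq : α (Sum.inr i) with y | y
        · exact mem_Lset.mpr ⟨y, by rw [← hi, ← pres (Sum.inr i), hq]⟩
        · exfalso; have := hs (Sum.inr i); rw [hq] at this; simp at this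

/-- If two colorings are related by an automorphism then their color-set pairs agree. -/
lemma rel_sets (hn : 0 < n) {c₁ c₂ : Fin n ⊕ Fin n → Fin k}
    (α : completeBipartiteGraph (Fin n) (Fin n) ≃g completeBipartiteGraph (Fin n) (Fin n))
    (h : ∀ v, c₁ v = c₂ (α v)) :
    (Lset c₁ = Lset c₂ ∧ Rset c₁ = Rset c₂) ∨
    (Lset c₁ = Rset c₂ ∧ Rset c₁ = Lset c₂) := by
  have key : ∀ (d₁ d₂ : Fin n ⊕ Fin n → Fin k)
      (β : completeBipartiteGraph (Fin n) (Fin n) ≃g completeBipartiteGraph (Fin n) (Fin n)),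
      (∀ v, d₁ v = d₂ (β v)) → (∀ v, (β v).isLeft = v.isLeft) →
      Lset d₁ ⊆ Lset d₂ ∧ Rset d₁ ⊆ Rset d₂ := by
    intro d₁ d₂ β hβ hsd
    constructor
    · intro a ha
      obtain ⟨i, hi⟩ := mem_Lset.mp ha
      rcases hq : β (Sum.inl i) with y | y
      · exact mem_Lset.mpr ⟨y, by rw [← hi, hβ (Sum.inl i), hq]⟩
      · exfalso; have := hsd (Sum.inl i); rw [hq] at this; simp at this
    · intro a ha
      obtain ⟨i, hi⟩ := mem_Rset.mp ha
      rcases hq : β (Sum.inr i) with y | y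
      · exfalso; have := hsd (Sum.inr i); rw [hq] at this; simp at this
      · exact mem_Rset.mpr ⟨y, by rw [← hi, hβ (Sum.inr i), hq]⟩
  have key2 : ∀ (d₁ d₂ : Fin n ⊕ Fin n → Fin k)
      (β : completeBipartiteGraph (Fin n) (Fin n) ≃g completeBipartiteGraph (Fin n) (Fin n)),
      (∀ v, d₁ v = d₂ (β v)) → (∀ v, (β v).isLeft = !v.isLeft) →
      Lset d₁ ⊆ Rset d₂ ∧ Rset d₁ ⊆ Lset d₂ := by
    intro d₁ d₂ β hβ hsd
    constructor
    · intro a ha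
      obtain ⟨i, hi⟩ := mem_Lset.mp ha
      rcases hq : β (Sum.inl i) with y | y
      · exfalso; have := hsd (Sum.inl i); rw [hq] at this; simp at this
      · exact mem_Rset.mpr ⟨y, by rw [← hi, hβ (Sum.inl i), hq]⟩
    · intro a ha
      obtain ⟨i, hi⟩ := mem_Rset.mp ha
      rcases hq : β (Sum.inr i) with y | y
      · exact mem_Lset.mpr ⟨y, by rw [← hi, hβ (Sum.inr i), hq]⟩
      · exfalso; have := hsd (Sum.inr i); rw [hq] at this; simp at this
  have h' : ∀ v, c₂ v = c₁ (α.symm v) := by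
    intro v
    rw [h (α.symm v), α.apply_symm_apply]
  rcases sides hn α with hs | hs
  · have hs' : ∀ v, (α.symm v).isLeft = v.isLeft := by
      intro v
      have := hs (α.symm v)
      rw [α.apply_symm_apply] at this
      exact this.symm
    obtain ⟨k1, k2⟩ := key c₁ c₂ α h hs
    obtain ⟨k3, k4⟩ := key c₂ c₁ α.symm h' hs'
    exact Or.inl ⟨Finset.Subset.antisymm k1 k3, Finset.Subset.antisymm k2 k4⟩
  · have hs' : ∀ v, (α.symm v).isLeft = !v.isLeft := by
      intro v
      have := hs (α.symm v)
      rw [α.apply_symm_apply] at this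
      rw [this, Bool.not_not]
    obtain ⟨k1, k2⟩ := key2 c₁ c₂ α h hs
    obtain ⟨k3, k4⟩ := key2 c₂ c₁ α.symm h' hs'
    exact Or.inr ⟨Finset.Subset.antisymm k1 k4, Finset.Subset.antisymm k2 k3⟩

/-- If the color-set pairs agree, the colorings are related by an automorphism. -/
lemma sets_rel {c₁ c₂ : Fin n ⊕ Fin n → Fin k}
    (hL₁ : Function.Injective (fun i => c₁ (Sum.inl i)))
    (hR₁ : Function.Injective (fun i => c₁ (Sum.inr i)))
    (hL₂ : Function.Injective (fun i => c₂ (Sum.inl i)))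
    (hR₂ : Function.Injective (fun i => c₂ (Sum.inr i)))
    (h : (Lset c₁ = Lset c₂ ∧ Rset c₁ = Rset c₂) ∨
         (Lset c₁ = Rset c₂ ∧ Rset c₁ = Lset c₂)) :
    ∃ α : completeBipartiteGraph (Fin n) (Fin n) ≃g completeBipartiteGraph (Fin n) (Fin n),
      ∀ v, c₁ v = c₂ (α v) := by
  rcases h with ⟨h1, h2⟩ | ⟨h1, h2⟩
  · obtain ⟨σ, hσ⟩ := exists_comp hL₁ hL₂ (by rw [← coe_Lset, ← coe_Lset, h1])
    obtain ⟨τ, hτ⟩ := exists_comp hR₁ hR₂ (by rw [← coe_Rset, ← coe_Rset, h2])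
    refine ⟨sumIso σ τ, ?_⟩
    rintro (x | x)
    · simpa using (hσ x).symm
    · simpa using (hτ x).symm
  · obtain ⟨σ, hσ⟩ := exists_comp hL₁ hR₂ (by rw [← coe_Lset, ← coe_Rset, h1])
    obtain ⟨τ, hτ⟩ := exists_comp hR₁ hL₂ (by rw [← coe_Rset, ← coe_Lset, h2])
    refine ⟨swapIso σ τ, ?_⟩
    rintro (x | x)
    · simpa using (hσ x).symm
    · simpa using (hτ x).symm

/-- Any `n`-subset of colors is realized by an injection from `Fin n`. -/
lemma exists_inj (A : Finset (Fin k)) (hA : A.card = n) :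
    ∃ f : Fin n → Fin k, Function.Injective f ∧ Finset.image f Finset.univ = A := by
  have hcard : Fintype.card A = n := by rw [Fintype.card_coe]; exact hA
  let e : Fin n ≃ A := (Fintype.equivFinOfCardEq hcard).symm
  refine ⟨fun i => (e i : Fin k), Subtype.coe_injective.comp e.injective, ?_⟩
  apply Finset.Subset.antisymm
  · intro a ha
    simp only [Finset.mem_image, Finset.mem_univ, true_and] at ha
    obtain ⟨i, hi⟩ := ha
    rw [← hi]
    exact (e i).2
  · intro a ha
    simp only [Finset.mem_image, Finset.mem_univ, true_and]
    exact ⟨e.symm ⟨a, ha⟩, by rw [Equiv.apply_symm_apply]⟩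

lemma Lset_card {c : Fin n ⊕ Fin n → Fin k}
    (h : Function.Injective (fun i => c (Sum.inl i))) : (Lset c).card = n := by
  rw [Lset, Finset.card_image_of_injective _ h, Finset.card_univ, Fintype.card_fin]

lemma Rset_card {c : Fin n ⊕ Fin n → Fin k}
    (h : Function.Injective (fun i => c (Sum.inr i))) : (Rset c).card = n := by
  rw [Rset, Finset.card_image_of_injective _ h, Finset.card_univ, Fintype.card_fin]

/-- The unordered pair of color sets attached to a distinguishing coloring. -/
noncomputable def F0 (hn : 0 < n)
    (c : {c : Fin n ⊕ Fin n → Fin k //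
        IsDistinguishing (completeBipartiteGraph (Fin n) (Fin n)) c}) :
    {a : Sym2 {s : Finset (Fin k) // s.card = n} // ¬ a.IsDiag} :=
  ⟨s(⟨Lset c.1, Lset_card ((dist_iff hn c.1).mp c.2).1⟩,
     ⟨Rset c.1, Rset_card ((dist_iff hn c.1).mp c.2).2.1⟩), by
    rw [Sym2.mk_isDiag_iff]
    intro hd
    exact ((dist_iff hn c.1).mp c.2).2.2 (congrArg Subtype.val hd)⟩

lemma F0_val (hn : 0 < n)
    (c : {c : Fin n ⊕ Fin n → Fin k //
        IsDistinguishing (completeBipartiteGraph (Fin n) (Fin n)) c}) :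
    (F0 hn c).1 = s(⟨Lset c.1, Lset_card ((dist_iff hn c.1).mp c.2).1⟩,
     ⟨Rset c.1, Rset_card ((dist_iff hn c.1).mp c.2).2.1⟩) := rfl

end PhiCBAux

theorem Phi_completeBipartite (n k : ℕ) (hn : 2 ≤ n) (hk : 1 ≤ k) :
    Phi (completeBipartiteGraph (Fin n) (Fin n)) k =
      k.choose n * (k.choose n - 1) / 2 := by
  classical
  open PhiCBAux in
  have hn0 : 0 < n := lt_of_lt_of_le two_pos hn
  set G := completeBipartiteGraph (Fin n) (Fin n) with hG
  set r := fun c₁ c₂ : {c : Fin n ⊕ Fin n → Fin k // IsDistinguishing G c} =>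
    ∃ α : G ≃g G, ∀ v, c₁.1 v = c₂.1 (α v) with hr
  have fact : ∀ c : {c : Fin n ⊕ Fin n → Fin k // IsDistinguishing G c},
      Function.Injective (fun i => c.1 (Sum.inl i)) ∧
      Function.Injective (fun i => c.1 (Sum.inr i)) ∧ Lset c.1 ≠ Rset c.1 :=
    fun c => (dist_iff hn0 c.1).mp c.2
  have hwd : ∀ c₁ c₂, r c₁ c₂ → F0 hn0 c₁ = F0 hn0 c₂ := by
    rintro c₁ c₂ ⟨α, hα⟩
    apply Subtype.ext
    rw [F0_val, F0_val, Sym2.eq_iff]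
    rcases rel_sets hn0 α hα with ⟨h1, h2⟩ | ⟨h1, h2⟩
    · exact Or.inl ⟨Subtype.ext h1, Subtype.ext h2⟩
    · exact Or.inr ⟨Subtype.ext h1, Subtype.ext h2⟩
  let F : Quot r → {a : Sym2 {s : Finset (Fin k) // s.card = n} // ¬ a.IsDiag} :=
    Quot.lift (F0 hn0) hwd
  have hFmk : ∀ c, F (Quot.mk r c) = F0 hn0 c := fun _ => rfl
  have hinj : Function.Injective F := by
    intro q₁ q₂
    refine Quot.induction_on₂ q₁ q₂ ?_
    intro c₁ c₂ h
    rw [hFmk, hFmk] at h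
    have h' := congrArg Subtype.val h
    rw [F0_val, F0_val, Sym2.eq_iff] at h'
    apply Quot.sound
    rcases h' with ⟨h1, h2⟩ | ⟨h1, h2⟩
    · exact sets_rel (fact c₁).1 (fact c₁).2.1 (fact c₂).1 (fact c₂).2.1
        (Or.inl ⟨congrArg Subtype.val h1, congrArg Subtype.val h2⟩)
    · exact sets_rel (fact c₁).1 (fact c₁).2.1 (fact c₂).1 (fact c₂).2.1
        (Or.inr ⟨congrArg Subtype.val h1, congrArg Subtype.val h2⟩)
  have hsurj : Function.Surjective F := by
    rintro ⟨z, hz⟩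
    induction z using Sym2.ind with
    | _ x y =>
      rw [Sym2.mk_isDiag_iff] at hz
      obtain ⟨f, hfinj, hfim⟩ := exists_inj (n := n) x.1 x.2
      obtain ⟨g, hginj, hgim⟩ := exists_inj (n := n) y.1 y.2
      set c : Fin n ⊕ Fin n → Fin k := Sum.elim f g with hc
      have hLc : Lset c = x.1 := by rw [← hfim]; rfl
      have hRc : Rset c = y.1 := by rw [← hgim]; rfl
      have hLinj : Function.Injective (fun i => c (Sum.inl i)) := hfinj
      have hRinj : Function.Injective (fun i => c (Sum.inr i)) := hginj
      have hne : Lset c ≠ Rset c := by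
        rw [hLc, hRc]
        intro hxy
        exact hz (Subtype.ext hxy)
      have hdist : IsDistinguishing G c := (dist_iff hn0 c).mpr ⟨hLinj, hRinj, hne⟩
      refine ⟨Quot.mk r ⟨c, hdist⟩, ?_⟩
      rw [hFmk]
      apply Subtype.ext
      rw [F0_val, Sym2.eq_iff]
      exact Or.inl ⟨Subtype.ext hLc, Subtype.ext hRc⟩
  have hcard : Nat.card (Quot r) =
      Nat.card {a : Sym2 {s : Finset (Fin k) // s.card = n} // ¬ a.IsDiag} :=
    Nat.card_eq_of_bijective F ⟨hinj, hsurj⟩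
  have hTcard : Nat.card {a : Sym2 {s : Finset (Fin k) // s.card = n} // ¬ a.IsDiag} =
      (k.choose n).choose 2 := by
    rw [Nat.card_eq_fintype_card, Sym2.card_subtype_not_diag, Fintype.card_finset_len,
      Fintype.card_fin]
  have hPhi : Phi G k = Nat.card (Quot r) := rfl
  rw [hPhi, hcard, hTcard, Nat.choose_two_right]
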